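/- Let δ ∈ D and suppose c ∈ L^1([0,1]^d) is non-negative, satisfies the marginal constraints ∫ c(u)1{u_i ≤ r}du = r for all i and r, and the diagonal constraint ∫ c(u)1{max(u) ≤ r}du = δ(r) for all r. Then c = 0 a.e. on the set {u : δ'(max(u)) = 0}. -/

import Mathlib

open MeasureTheory Set

/-- If c is a non-negative integrable function on the cube with uniform
marginals and diagonal constraint δ, then c = 0 a.e. on {u : δ'(max u) = 0}. -/
theorem vanishing_where_delta_deriv_zero
    (d : ℕ) (hd : 2 ≤ d) (δ δ' : ℝ → ℝ)
    (hmono : MonotoneOn δ (Set.Icc 0 1))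
    (hlip : ∀ s ∈ Set.Icc (0:ℝ) 1, ∀ t ∈ Set.Icc (0:ℝ) 1,
      |δ s - δ t| ≤ (d : ℝ) * |s - t|)
    (h0 : δ 0 = 0) (h1 : δ 1 = 1)
    (hderiv : ∀ᵐ t ∂(volume.restrict (Set.Icc (0:ℝ) 1)), HasDerivAt δ (δ' t) t)
    (hd' : ∀ᵐ t ∂(volume.restrict (Set.Icc (0:ℝ) 1)), δ' t ∈ Set.Icc (0:ℝ) (d:ℝ))
    (c : (Fin d → ℝ) → ℝ)
    (hint : IntegrableOn c (Set.univ.pi (fun _ : Fin d => Set.Icc (0:ℝ) 1)))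
    (hnn : ∀ᵐ u ∂(volume.restrict (Set.univ.pi (fun _ : Fin d => Set.Icc (0:ℝ) 1))),
      0 ≤ c u)
    (hmarg : ∀ i : Fin d, ∀ r ∈ Set.Icc (0:ℝ) 1,
      (∫ u in Set.univ.pi (fun _ : Fin d => Set.Icc (0:ℝ) 1),
        c u * (if u i ≤ r then 1 else 0)) = r)
    (hdiag : ∀ r ∈ Set.Icc (0:ℝ) 1,
      (∫ u in Set.univ.pi (fun _ : Fin d => Set.Icc (0:ℝ) 1),
        c u * (if (⨆ i, u i) ≤ r then 1 else 0)) = δ r) :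
    ∀ᵐ u ∂(volume.restrict (Set.univ.pi (fun _ : Fin d => Set.Icc (0:ℝ) 1))),
      δ' (⨆ i, u i) = 0 → c u = 0 := by
  classical
  have hdpos : (0:ℝ) < d := by positivity
  haveI : NeZero d := ⟨by omega⟩
  set cube : Set (Fin d → ℝ) := Set.univ.pi (fun _ : Fin d => Set.Icc (0:ℝ) 1) with hcube
  have hcube_meas : MeasurableSet cube :=
    MeasurableSet.univ_pi (fun _ => measurableSet_Icc)
  set P : Measure (Fin d → ℝ) := volume.restrict cube with hP
  set m : (Fin d → ℝ) → ℝ := fun u => ⨆ i, u i with hm_def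
  have hm : Measurable m := Measurable.iSup (fun i => measurable_pi_apply i)
  set ν : Measure (Fin d → ℝ) := P.withDensity (fun u => ENNReal.ofReal (c u)) with hν
  -- m is bounded on the cube
  have hm_mem : ∀ u ∈ cube, m u ∈ Set.Icc (0:ℝ) 1 := by
    intro u hu
    have hui : ∀ i, u i ∈ Set.Icc (0:ℝ) 1 := fun i => hu i (mem_univ i)
    have hbdd : BddAbove (Set.range u) := (Set.finite_range u).bddAbove
    constructor
    · exact le_trans (hui ⟨0, by omega⟩).1 (le_ciSup hbdd ⟨0, by omega⟩)
    · exact ciSup_le (fun i => (hui i).2)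
  -- ν is a finite measure
  haveI hνfin : IsFiniteMeasure ν := by
    constructor
    rw [hν, withDensity_apply _ MeasurableSet.univ, Measure.restrict_univ]
    calc ∫⁻ u, ENNReal.ofReal (c u) ∂P ≤ ∫⁻ u, (‖c u‖₊ : ENNReal) ∂P := by
          apply lintegral_mono
          intro u
          exact Real.ofReal_le_enorm _
      _ < ⊤ := hint.2
  set μ : Measure ℝ := ν.map m with hμ
  haveI hμfin : IsFiniteMeasure μ := by
    constructor
    rw [hμ, Measure.map_apply hm MeasurableSet.univ]
    exact measure_lt_top ν _
  -- value of μ on Iic r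
  have hνIic : ∀ r : ℝ, μ (Set.Iic r) =
      ∫⁻ u in (m ⁻¹' Set.Iic r), ENNReal.ofReal (c u) ∂P := by
    intro r
    rw [hμ, Measure.map_apply hm measurableSet_Iic, hν,
      withDensity_apply _ (hm measurableSet_Iic)]
  have hIic : ∀ r ∈ Set.Icc (0:ℝ) 1, μ (Set.Iic r) = ENNReal.ofReal (δ r) := by
    intro r hr
    have hind : Measurable (fun u : Fin d → ℝ => if m u ≤ r then (1:ℝ) else 0) := by
      have : MeasurableSet {u : Fin d → ℝ | m u ≤ r} := hm measurableSet_Iic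
      exact Measurable.ite this measurable_const measurable_const
    have hfint : Integrable (fun u => c u * (if m u ≤ r then (1:ℝ) else 0)) P := by
      refine Integrable.mono' hint.abs (hint.1.mul hind.aestronglyMeasurable) ?_
      filter_upwards with u
      rcases le_or_gt (m u) r with h | h
      · rw [if_pos h, mul_one, Real.norm_eq_abs]
      · rw [if_neg (not_le.mpr h), mul_zero, norm_zero]
        exact abs_nonneg _
    have hfnn : 0 ≤ᵐ[P] (fun u => c u * (if m u ≤ r then (1:ℝ) else 0)) := by
      filter_upwards [hnn] with u hu
      simp only [Pi.zero_apply]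
      rcases le_or_gt (m u) r with h | h
      · rw [if_pos h, mul_one]; exact hu
      · rw [if_neg (not_le.mpr h), mul_zero]
    have key : ENNReal.ofReal (∫ u, c u * (if m u ≤ r then (1:ℝ) else 0) ∂P)
        = ∫⁻ u in (m ⁻¹' Set.Iic r), ENNReal.ofReal (c u) ∂P := by
      rw [ofReal_integral_eq_lintegral_ofReal hfint hfnn,
        ← lintegral_indicator (hm measurableSet_Iic)]
      congr 1
      ext u
      rcases le_or_gt (m u) r with h | h
      · have hmem : u ∈ m ⁻¹' Set.Iic r := h
        rw [Set.indicator_of_mem hmem, if_pos h, mul_one]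
      · have hmem : u ∉ m ⁻¹' Set.Iic r := not_le.mpr h
        rw [Set.indicator_of_notMem hmem, if_neg (not_le.mpr h), mul_zero,
          ENNReal.ofReal_zero]
    rw [hνIic r, ← key]
    congr 1
    exact hdiag r hr
  -- μ of sets that miss the cube's image
  have hν_null : ∀ A : Set (Fin d → ℝ), MeasurableSet A → A ∩ cube = ∅ → ν A = 0 := by
    intro A hA hAc
    rw [hν, withDensity_apply _ hA]
    have : P A = 0 := by
      rw [hP, Measure.restrict_apply hA, hAc, measure_empty]
    rw [setLIntegral_measure_zero _ _ this]
  have hIoi1 : μ (Set.Ioi 1) = 0 := by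
    rw [hμ, Measure.map_apply hm measurableSet_Ioi]
    apply hν_null _ (hm measurableSet_Ioi)
    ext u
    simp only [Set.mem_inter_iff, Set.mem_preimage, Set.mem_Ioi, Set.mem_empty_iff_false,
      iff_false, not_and]
    intro hmu hu
    exact absurd (hm_mem u hu).2 (not_le.mpr hmu)
  have hIic_lt : ∀ t < (0:ℝ), μ (Set.Iic t) = 0 := by
    intro t ht
    have h0' : μ (Set.Iic 0) = 0 := by
      rw [hIic 0 (by constructor <;> norm_num), h0, ENNReal.ofReal_zero]
    exact le_antisymm (le_trans (measure_mono (Set.Iic_subset_Iic.mpr ht.le)) h0'.le)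
      zero_le
  have hIic_gt : ∀ t : ℝ, 1 < t → μ (Set.Iic t) = ENNReal.ofReal 1 := by
    intro t ht
    have hone : μ (Set.Iic 1) = ENNReal.ofReal 1 := by
      rw [hIic 1 ⟨by norm_num, le_refl 1⟩, h1]
    have hsplit : Set.Iic t = Set.Iic 1 ∪ Set.Ioc 1 t := (Set.Iic_union_Ioc_eq_Iic ht.le).symm
    have hzero : μ (Set.Ioc 1 t) = 0 :=
      le_antisymm (le_trans (measure_mono Set.Ioc_subset_Ioi_self) hIoi1.le) zero_le
    apply le_antisymm
    · calc μ (Set.Iic t) ≤ μ (Set.Iic 1) + μ (Set.Ioc 1 t) := by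
            rw [hsplit]; exact measure_union_le _ _
        _ = ENNReal.ofReal 1 := by rw [hone, hzero, add_zero]
    · rw [← hone]
      exact measure_mono (Set.Iic_subset_Iic.mpr ht.le)
  -- the clamped Stieltjes function
  have hproj_mem : ∀ t : ℝ, max 0 (min t 1) ∈ Set.Icc (0:ℝ) 1 := by
    intro t
    constructor
    · exact le_max_left _ _
    · exact max_le (by norm_num) (min_le_right _ _)
  have hproj_mono : Monotone (fun t : ℝ => max 0 (min t 1)) := by
    intro s t hst
    exact max_le_max le_rfl (min_le_min hst le_rfl)
  have hproj_lip : ∀ s t : ℝ, |max 0 (min s 1) - max 0 (min t 1)| ≤ |s - t| := by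
    intro s t
    have h1' := abs_max_sub_max_le_abs (min s 1) (min t 1) 0
    have h2' := abs_min_sub_min_le_max (s) (1:ℝ) t 1
    calc |max 0 (min s 1) - max 0 (min t 1)| = |max (min s 1) 0 - max (min t 1) 0| := by
          rw [max_comm 0 (min s 1), max_comm 0 (min t 1)]
      _ ≤ |min s 1 - min t 1| := h1'
      _ ≤ max |s - t| |(1:ℝ) - 1| := h2'
      _ = |s - t| := by simp
  set F0 : ℝ → ℝ := fun t => δ (max 0 (min t 1)) with hF0
  have hF0_lip : ∀ s t : ℝ, |F0 s - F0 t| ≤ (d:ℝ) * |s - t| := by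
    intro s t
    calc |F0 s - F0 t| ≤ (d:ℝ) * |max 0 (min s 1) - max 0 (min t 1)| :=
        hlip _ (hproj_mem s) _ (hproj_mem t)
      _ ≤ (d:ℝ) * |s - t| := by
          apply mul_le_mul_of_nonneg_left (hproj_lip s t) hdpos.le
  have hF0_mono : Monotone F0 := fun s t hst =>
    hmono (hproj_mem s) (hproj_mem t) (hproj_mono hst)
  have hF0_cont : Continuous F0 := by
    have hδc : ContinuousOn δ (Set.Icc 0 1) := by
      apply LipschitzOnWith.continuousOn (K := (d : NNReal))
      rw [lipschitzOnWith_iff_dist_le_mul]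
      intro x hx y hy
      rw [Real.dist_eq, Real.dist_eq, NNReal.coe_natCast]
      exact hlip x hx y hy
    have hpc : Continuous (fun t : ℝ => max 0 (min t 1)) :=
      continuous_const.max (continuous_id.min continuous_const)
    exact hδc.comp_continuous hpc (fun t => hproj_mem t)
  set F : StieltjesFunction ℝ := ⟨F0, hF0_mono, fun x => (hF0_cont.continuousWithinAt)⟩ with hF
  have hF_apply : ∀ t, F t = δ (max 0 (min t 1)) := fun t => rfl
  -- F tends to 0 at -∞
  have hF_bot : Filter.Tendsto F Filter.atBot (nhds 0) := by
    have : ∀ t : ℝ, t ≤ 0 → F t = 0 := by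
      intro t ht
      rw [hF_apply, min_eq_left (ht.trans (by norm_num)), max_eq_left ht, h0]
    apply Filter.Tendsto.congr' _ tendsto_const_nhds
    filter_upwards [Filter.eventually_le_atBot (0:ℝ)] with t ht
    exact (this t ht).symm
  -- μ = F.measure
  have hμF : μ = F.measure := by
    apply MeasureTheory.Measure.ext_of_Iic
    intro a
    rw [F.measure_Iic hF_bot a, sub_zero]
    rcases lt_or_ge a 0 with ha | ha
    · rw [hIic_lt a ha, hF_apply, min_eq_left (ha.le.trans (by norm_num)),
        max_eq_left ha.le, h0, ENNReal.ofReal_zero]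
    rcases le_or_gt a 1 with ha1 | ha1
    · rw [hIic a ⟨ha, ha1⟩, hF_apply, min_eq_left ha1, max_eq_right ha]
    · rw [hIic_gt a ha1, hF_apply, min_eq_right ha1.le,
        max_eq_right (by norm_num : (0:ℝ) ≤ 1), h1]
  -- absolute continuity: μ ≤ d • volume
  set G : StieltjesFunction ℝ := ⟨fun t => (d:ℝ) * t - F0 t,
    by
      intro s t hst
      have h1' : F0 t - F0 s ≤ (d:ℝ) * (t - s) := by
        calc F0 t - F0 s ≤ |F0 t - F0 s| := le_abs_self _
          _ ≤ (d:ℝ) * |t - s| := hF0_lip t s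
          _ = (d:ℝ) * (t - s) := by rw [abs_of_nonneg (sub_nonneg.mpr hst)]
      show (d:ℝ) * s - F0 s ≤ (d:ℝ) * t - F0 t
      linarith,
    fun x => ((continuous_const.mul continuous_id).sub hF0_cont).continuousWithinAt⟩ with hG
  have hFG : F + G = (d : NNReal) • StieltjesFunction.id := by
    apply StieltjesFunction.ext
    intro x
    show F0 x + ((d:ℝ) * x - F0 x) = ((d : NNReal) : ℝ) * x
    push_cast
    ring
  have hle : μ ≤ (d : NNReal) • (volume : Measure ℝ) := by
    rw [hμF]
    intro s
    have h2' : F.measure s + G.measure s = (F + G).measure s := by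
      rw [StieltjesFunction.measure_add]; rfl
    have h3' : (F + G).measure = (d : NNReal) • (volume : Measure ℝ) := by
      rw [hFG, StieltjesFunction.measure_smul, Real.volume_eq_stieltjes_id]
    calc F.measure s ≤ F.measure s + G.measure s := le_self_add
      _ = (F + G).measure s := h2'
      _ = ((d : NNReal) • (volume : Measure ℝ)) s := by rw [h3']
  have hac : μ ≪ (volume : Measure ℝ) := by
    intro s hs
    have := hle s
    rw [Measure.smul_apply, hs, smul_zero] at this
    exact le_antisymm this zero_le
  -- Radon-Nikodym derivative
  set g : ℝ → ENNReal := μ.rnDeriv volume with hg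
  have hμrn : volume.withDensity g = μ := Measure.withDensity_rnDeriv_eq μ volume hac
  -- the set where g is 0 or ⊤ is μ-null
  set B : Set ℝ := g ⁻¹' {0} ∪ g ⁻¹' {⊤} with hB
  have hgmeas : Measurable g := Measure.measurable_rnDeriv μ volume
  have hBmeas : MeasurableSet B :=
    (hgmeas (measurableSet_singleton 0)).union (hgmeas (measurableSet_singleton ⊤))
  have hμB : μ B = 0 := by
    have h1' : μ (g ⁻¹' {0}) = 0 := by
      rw [← hμrn, withDensity_apply _ (hgmeas (measurableSet_singleton 0))]
      rw [setLIntegral_congr_fun (hgmeas (measurableSet_singleton 0))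
        (fun x hx => hx)]
      simp
    have h2' : μ (g ⁻¹' {⊤}) = 0 := by
      apply hac
      have htop := Measure.rnDeriv_lt_top μ (volume : Measure ℝ)
      apply measure_mono_null _ (ae_iff.mp htop)
      intro x hx
      simp only [Set.mem_preimage, Set.mem_singleton_iff] at hx
      simp only [Set.mem_setOf_eq, not_lt, top_le_iff]
      exact hx
    refine le_antisymm ?_ zero_le
    calc μ B ≤ μ (g ⁻¹' {0}) + μ (g ⁻¹' {⊤}) := measure_union_le _ _
      _ = 0 := by rw [h1', h2', add_zero]
  -- derivative identification on (0,1)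
  have hS : volume {x | x ∈ Set.Ioo (0:ℝ) 1 ∧ δ' x ≠ (g x).toReal} = 0 := by
    have hFd : ∀ᵐ x ∂(volume : Measure ℝ), HasDerivAt F ((g x).toReal) x := by
      have h := F.ae_hasDerivAt
      rw [← hμF] at h
      exact h
    have hδd : ∀ᵐ x ∂(volume : Measure ℝ), x ∈ Set.Icc (0:ℝ) 1 → HasDerivAt δ (δ' x) x :=
      (ae_restrict_iff' measurableSet_Icc).mp hderiv
    rw [measure_eq_zero_iff_ae_notMem]
    filter_upwards [hFd, hδd] with x hFx hδx
    rintro ⟨hx01, hne⟩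
    have hEq : δ =ᶠ[nhds x] F := by
      have hmem : Set.Ioo (0:ℝ) 1 ∈ nhds x := Ioo_mem_nhds hx01.1 hx01.2
      filter_upwards [hmem] with t ht
      show δ t = F t
      rw [hF_apply t, min_eq_left ht.2.le, max_eq_right ht.1.le]
    have h1' : HasDerivAt δ ((g x).toReal) x := hFx.congr_of_eventuallyEq hEq
    exact hne ((hδx ⟨hx01.1.le, hx01.2.le⟩).unique h1')
  set N' : Set ℝ := toMeasurable volume {x | x ∈ Set.Ioo (0:ℝ) 1 ∧ δ' x ≠ (g x).toReal} with hN'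
  have hN'meas : MeasurableSet N' := measurableSet_toMeasurable _ _
  have hN'null : volume N' = 0 := by rw [hN', measure_toMeasurable]; exact hS
  have hμN' : μ N' = 0 := hac hN'null
  -- the bad set
  set Bad : Set ℝ := B ∪ N' with hBad
  have hBadmeas : MeasurableSet Bad := hBmeas.union hN'meas
  have hμBad : μ Bad = 0 :=
    le_antisymm (le_trans (measure_union_le _ _) (by rw [hμB, hμN', add_zero])) zero_le
  have hνE : ν (m ⁻¹' Bad) = 0 := by
    rw [hμ, Measure.map_apply hm hBadmeas] at hμBad
    exact hμBad
  have hE0 : ∀ᵐ u ∂P, u ∈ m ⁻¹' Bad → ENNReal.ofReal (c u) = 0 := by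
    rw [hν, withDensity_apply _ (hm hBadmeas)] at hνE
    refine (setLIntegral_eq_zero_iff' (hm hBadmeas) ?_).mp hνE
    exact ENNReal.measurable_ofReal.comp_aemeasurable (hint.1.aemeasurable.restrict)
  -- faces are null
  have hface : ∀ i : Fin d, ∀ a : ℝ, P ((fun u : Fin d → ℝ => u i) ⁻¹' {a}) = 0 := by
    intro i a
    have hmeas : MeasurableSet ((fun u : Fin d → ℝ => u i) ⁻¹' {a}) :=
      (measurable_pi_apply i) (measurableSet_singleton a)
    rw [hP, Measure.restrict_apply hmeas]
    set t : Fin d → Set ℝ := fun j => if j = i then {a} else Set.Icc 0 1 with ht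
    have hsub : ((fun u : Fin d → ℝ => u i) ⁻¹' {a}) ∩ cube ⊆ Set.univ.pi t := by
      rintro u ⟨hu1, hu2⟩ j _
      rw [ht]
      by_cases hj : j = i
      · subst hj; simpa using hu1
      · simp only [if_neg hj]
        exact hu2 j (mem_univ j)
    have hzero : volume (Set.univ.pi t) = 0 := by
      rw [volume_pi_pi]
      apply Finset.prod_eq_zero (Finset.mem_univ i)
      simp [ht]
    exact measure_mono_null hsub hzero
  have hfaces : ∀ᵐ u ∂P, ∀ i : Fin d, u i ≠ 0 ∧ u i ≠ 1 := by
    rw [ae_all_iff]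
    intro i
    have h0' := measure_eq_zero_iff_ae_notMem.mp (hface i 0)
    have h1' := measure_eq_zero_iff_ae_notMem.mp (hface i 1)
    filter_upwards [h0', h1'] with u hu0 hu1
    refine ⟨?_, ?_⟩ <;> [simpa using hu0; simpa using hu1]
  -- conclusion
  filter_upwards [hnn, ae_restrict_mem hcube_meas, hE0, hfaces] with u hu0 hucube huE hufaces
  intro hδ'
  obtain ⟨i0, hi0⟩ := Finite.exists_max u
  have hmu : m u = u i0 :=
    le_antisymm (ciSup_le hi0) (le_ciSup (Set.finite_range u).bddAbove i0)
  have hui0 : u i0 ∈ Set.Icc (0:ℝ) 1 := hucube i0 (mem_univ i0)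
  have hmIoo : m u ∈ Set.Ioo (0:ℝ) 1 := by
    rw [hmu]
    exact ⟨lt_of_le_of_ne hui0.1 (Ne.symm (hufaces i0).1),
      lt_of_le_of_ne hui0.2 (hufaces i0).2⟩
  have hcu : ENNReal.ofReal (c u) = 0 → c u = 0 := by
    intro h
    have := ENNReal.ofReal_eq_zero.mp h
    linarith
  have hδm : δ' (m u) = 0 := hδ'
  by_cases hmem : m u ∈ N'
  · exact hcu (huE (Set.mem_union_right _ hmem))
  · have hnotS : m u ∉ {x | x ∈ Set.Ioo (0:ℝ) 1 ∧ δ' x ≠ (g x).toReal} :=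
      fun h => hmem (subset_toMeasurable _ _ h)
    have heq : δ' (m u) = (g (m u)).toReal := by
      by_contra hne
      exact hnotS ⟨hmIoo, hne⟩
    have htr : (g (m u)).toReal = 0 := by rw [← heq]; exact hδm
    have hB' : m u ∈ B := by
      rcases (ENNReal.toReal_eq_zero_iff _).mp htr with h | h
      · exact Set.mem_union_left _ h
      · exact Set.mem_union_right _ h
    exact hcu (huE (Set.mem_union_left _ hB'))
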